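/- Let p and q be coprime odd positive integers. Then there exist n ≥ 1 and integers δ_1, …, δ_n such that every δ_i is even, |δ_i| ≥ 2 for all i, the denominator q_n of the negative continued fraction [δ_1, …, δ_n] is nonzero, and (p+q)/p = p_n/q_n (i.e. (p+q)/p = [δ_1, …, δ_n]). -/
import Mathlib


/-- Convergent numerators of the negative continued fraction `[δ 1, …, δ n]`. -/
def ncfP (δ : ℕ → ℤ) : ℕ → ℤ
  | 0 => 1
  | 1 => δ 1
  | (i+2) => δ (i+2) * ncfP δ (i+1) - ncfP δ i

/-- Convergent denominators of the negative continued fraction `[δ 1, …, δ n]`. -/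
def ncfQ (δ : ℕ → ℤ) : ℕ → ℤ
  | 0 => 0
  | 1 => 1
  | (i+2) => δ (i+2) * ncfQ δ (i+1) - ncfQ δ i

def ncfCons (d : ℤ) (δ : ℕ → ℤ) : ℕ → ℤ := fun i => if i ≤ 1 then d else δ (i-1)

lemma ncf_cons (d : ℤ) (δ : ℕ → ℤ) :
    ∀ n, 1 ≤ n → ncfP (ncfCons d δ) (n+1) = d * ncfP δ n - ncfQ δ n ∧
      ncfQ (ncfCons d δ) (n+1) = ncfP δ n := by
  intro n
  induction n using Nat.strong_induction_on with
  | _ n ih =>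
    match n with
    | 0 => intro h; omega
    | 1 =>
      intro _
      constructor
      · show ncfCons d δ 2 * ncfCons d δ 1 - 1 = d * δ 1 - 1
        simp [ncfCons]; ring
      · show ncfCons d δ 2 * 1 - 0 = δ 1
        simp [ncfCons]
    | 2 =>
      intro _
      constructor
      · show ncfCons d δ 3 * ncfP (ncfCons d δ) 2 - ncfP (ncfCons d δ) 1
            = d * ncfP δ 2 - ncfQ δ 2
        simp [ncfP, ncfQ, ncfCons]; ring
      · show ncfCons d δ 3 * ncfQ (ncfCons d δ) 2 - ncfQ (ncfCons d δ) 1 = ncfP δ 2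
        simp [ncfP, ncfQ, ncfCons]
    | (m+3) =>
      intro _
      obtain ⟨h1, h2⟩ := ih (m+2) (by omega) (by omega)
      obtain ⟨h3, h4⟩ := ih (m+1) (by omega) (by omega)
      have h1' : ncfP (ncfCons d δ) (m+3) = d * ncfP δ (m+2) - ncfQ δ (m+2) := h1
      have h2' : ncfQ (ncfCons d δ) (m+3) = ncfP δ (m+2) := h2
      have h3' : ncfP (ncfCons d δ) (m+2) = d * ncfP δ (m+1) - ncfQ δ (m+1) := h3
      have h4' : ncfQ (ncfCons d δ) (m+2) = ncfP δ (m+1) := h4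
      have eC : ncfP (ncfCons d δ) (m+4)
          = ncfCons d δ (m+4) * ncfP (ncfCons d δ) (m+3) - ncfP (ncfCons d δ) (m+2) := rfl
      have eD : ncfQ (ncfCons d δ) (m+4)
          = ncfCons d δ (m+4) * ncfQ (ncfCons d δ) (m+3) - ncfQ (ncfCons d δ) (m+2) := rfl
      have hc : ncfCons d δ (m+4) = δ (m+3) := by
        simp only [ncfCons]
        norm_num
      have eP : ncfP δ (m+3) = δ (m+3) * ncfP δ (m+2) - ncfP δ (m+1) := rfl
      have eQ : ncfQ δ (m+3) = δ (m+3) * ncfQ δ (m+2) - ncfQ δ (m+1) := rfl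
      constructor
      · show ncfP (ncfCons d δ) (m+4) = d * ncfP δ (m+3) - ncfQ δ (m+3)
        rw [eC, hc, h1', h3', eP, eQ]; ring
      · show ncfQ (ncfCons d δ) (m+4) = ncfP δ (m+3)
        rw [eD, hc, h2', h4', eP]

lemma ncf_key : ∀ N : ℕ, ∀ x y : ℤ, y.natAbs ≤ N → y ≠ 0 → |y| < |x| → IsCoprime x y →
    Odd (x + y) →
    ∃ (n : ℕ) (δ : ℕ → ℤ), 1 ≤ n ∧
      (∀ i, 1 ≤ i → i ≤ n → Even (δ i) ∧ 2 ≤ |δ i|) ∧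
      ncfQ δ n ≠ 0 ∧
      (x : ℚ) / (y : ℚ) = (ncfP δ n : ℚ) / (ncfQ δ n : ℚ) := by
  intro N
  induction N with
  | zero =>
    intro x y hN hy _ _ _
    exact absurd (Int.natAbs_eq_zero.mp (Nat.le_zero.mp hN)) hy
  | succ N ih =>
    intro x y hN hy hlt hcop hodd
    by_cases h1 : y.natAbs = 1
    · -- terminal case : y = ±1
      have hy1 : y = 1 ∨ y = -1 := Int.natAbs_eq_iff.mp h1
      have hyodd : Odd y := by rcases hy1 with h | h <;> rw [h] <;> decide
      have hxeven : Even x := by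
        have := hodd.sub_odd hyodd
        simpa using this
      have hx2 : 2 ≤ |x| := by
        have : |y| = 1 := by rcases hy1 with h | h <;> rw [h] <;> decide
        omega
      refine ⟨1, fun _ => x * y, le_refl 1, ?_, ?_, ?_⟩
      · intro i _ _
        refine ⟨hxeven.mul_right y, ?_⟩
        rw [abs_mul]
        have : |y| = 1 := by rcases hy1 with h | h <;> rw [h] <;> decide
        rw [this, mul_one]
        exact hx2
      · show (1 : ℤ) ≠ 0; decide
      · show (x : ℚ) / (y : ℚ) = ((x * y : ℤ) : ℚ) / ((1 : ℤ) : ℚ)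
        rcases hy1 with h | h <;> rw [h] <;> push_cast <;> ring
    · -- step case : |y| ≥ 2
      have ha2 : 2 ≤ |y| := by
        rw [Int.abs_eq_natAbs]
        omega
      set a : ℤ := |y| with ha_def
      have ha0 : (0:ℤ) < 2 * a := by omega
      set t : ℤ := (-x) % (2 * a) with ht_def
      have ht0 : 0 ≤ t := Int.emod_nonneg _ (by omega)
      have ht2 : t < 2 * a := Int.emod_lt_of_pos _ ha0
      have htd : (2 * a) ∣ (t + x) := by
        have : t = -x - 2 * a * (-x / (2 * a)) := Int.emod_def _ _
        exact ⟨-(-x / (2 * a)), by linarith⟩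
      have hya : y ∣ a := (dvd_abs y y).mpr dvd_rfl
      have hy2a : (2 : ℤ) * y ∣ 2 * a := mul_dvd_mul_left 2 hya
      have hyx_not : ¬ y ∣ x := by
        intro hdvd
        have : IsUnit y := hcop.isUnit_of_dvd' hdvd dvd_rfl
        rw [Int.isUnit_iff] at this
        rcases this with h | h <;> simp [h] at h1
      have htne : t ≠ a := by
        intro h
        apply hyx_not
        have h2 : y ∣ t + x := dvd_trans (hya.mul_left 2) htd
        have h3 : y ∣ t := h ▸ hya
        have := dvd_sub h2 h3
        simpa using this
      obtain ⟨r, hr_lt, hr_dvd⟩ : ∃ r : ℤ, |r| < a ∧ (2 * y) ∣ (r + x) := by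
        by_cases hts : t < a
        · exact ⟨t, by rw [abs_of_nonneg ht0]; exact hts, dvd_trans hy2a htd⟩
        · refine ⟨t - 2 * a, ?_, ?_⟩
          · rw [abs_lt]
            constructor <;> [skip; omega]
            have : a < t := by omega
            omega
          · have : t - 2 * a + x = (t + x) - (2 * a) := by ring
            rw [this]
            exact dvd_sub (dvd_trans hy2a htd) hy2a
      set k : ℤ := (r + x) / (2 * y) with hk_def
      have hk : 2 * y * k = r + x := Int.mul_ediv_cancel' hr_dvd
      have hx_eq : x = 2 * y * k - r := by linarith
      have hyr_not : ¬ y ∣ x → r ≠ 0 := by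
        intro h hr0
        exact h ⟨2 * k, by rw [hr0] at hk; linarith⟩
      have hr0 : r ≠ 0 := hyr_not hyx_not
      have hk0 : k ≠ 0 := by
        intro h
        rw [h, mul_zero] at hk
        have : r = -x := by linarith
        rw [this, abs_neg] at hr_lt
        omega
      have hcop' : IsCoprime y r := by
        have h1 : IsCoprime y (-x) := (hcop.neg_left).symm
        have h2 := h1.add_mul_left_right (2 * k)
        have : -x + y * (2 * k) = r := by linarith
        rwa [this] at h2
      have hodd' : Odd (y + r) := by
        have heven : Even (r - x) := ⟨y * k - x, by linarith⟩
        have := hodd.add_even heven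
        have heq : x + y + (r - x) = y + r := by ring
        rwa [heq] at this
      have hrabs : r.natAbs ≤ N := by
        have h1 : |r| = (r.natAbs : ℤ) := Int.abs_eq_natAbs r
        have h2 : |y| = (y.natAbs : ℤ) := Int.abs_eq_natAbs y
        omega
      obtain ⟨n, δ, hn1, hδ, hQ, heq⟩ := ih y r hrabs hr0 (by omega) hcop' hodd'
      obtain ⟨hP', hQ'⟩ := ncf_cons (2 * k) δ n hn1
      have hPne : ncfP δ n ≠ 0 := by
        intro h0
        have hyq : (y : ℚ) / (r : ℚ) ≠ 0 := by
          apply div_ne_zero <;> exact_mod_cast ‹_›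
        rw [heq, h0] at hyq
        simp at hyq
      refine ⟨n + 1, ncfCons (2 * k) δ, by omega, ?_, ?_, ?_⟩
      · intro i hi1 hin
        by_cases hi : i ≤ 1
        · have : i = 1 := by omega
          constructor
          · show Even (ncfCons (2 * k) δ i)
            simp only [ncfCons, if_pos hi]
            exact ⟨k, by ring⟩
          · show 2 ≤ |ncfCons (2 * k) δ i|
            simp only [ncfCons, if_pos hi]
            rw [abs_mul]
            have : 1 ≤ |k| := by
              rcases abs_pos.mpr hk0 with h
              omega
            have : |(2:ℤ)| = 2 := by decide
            rw [this]
            nlinarith [abs_pos.mpr hk0]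
        · obtain ⟨he, hb⟩ := hδ (i - 1) (by omega) (by omega)
          constructor
          · show Even (ncfCons (2 * k) δ i)
            simpa only [ncfCons, if_neg hi] using he
          · show 2 ≤ |ncfCons (2 * k) δ i|
            simpa only [ncfCons, if_neg hi] using hb
      · rw [hQ']; exact hPne
      · rw [hP', hQ']
        have hyQ : (y : ℚ) ≠ 0 := by exact_mod_cast hy
        have hrQ : (r : ℚ) ≠ 0 := by exact_mod_cast hr0
        have hPQ : ((ncfP δ n : ℤ) : ℚ) ≠ 0 := by exact_mod_cast hPne
        have hQQ : ((ncfQ δ n : ℤ) : ℚ) ≠ 0 := by exact_mod_cast hQ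
        have hxq : (x : ℚ) = 2 * (y : ℚ) * (k : ℚ) - (r : ℚ) := by
          exact_mod_cast congrArg (fun z : ℤ => (z : ℚ)) hx_eq
        field_simp at heq ⊢
        push_cast
        rw [hxq]
        linear_combination heq

/-- for coprime odd positive integers `p`, `q` there is a
negative continued fraction expansion `(p+q)/p = [δ 1, …, δ n]` with all
`δ i` even and `|δ i| ≥ 2`. -/
theorem stmt13 (p q : ℤ) (hcop : IsCoprime p q) (hp : Odd p) (hq : Odd q)
    (hppos : 0 < p) (hqpos : 0 < q) :
    ∃ (n : ℕ) (δ : ℕ → ℤ), 1 ≤ n ∧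
      (∀ i, 1 ≤ i → i ≤ n → Even (δ i) ∧ 2 ≤ |δ i|) ∧
      ncfQ δ n ≠ 0 ∧
      ((p : ℚ) + (q : ℚ)) / (p : ℚ) = (ncfP δ n : ℚ) / (ncfQ δ n : ℚ) := by
  have hp0 : p ≠ 0 := hppos.ne'
  have hlt : |p| < |p + q| := by
    rw [abs_of_pos hppos, abs_of_pos (by linarith)]
    linarith
  have hcop' : IsCoprime (p + q) p := by
    have h2 := (hcop.symm.add_mul_right_left 1)
    rw [one_mul] at h2
    rwa [add_comm] at h2
  have hodd : Odd (p + q + p) := by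
    have := hq.add_even (⟨p, rfl⟩ : Even (p + p))
    have heq : q + (p + p) = p + q + p := by ring
    rwa [heq] at this
  obtain ⟨n, δ, hn, hδ, hQ, heq⟩ :=
    ncf_key p.natAbs (p + q) p le_rfl hp0 hlt hcop' hodd
  refine ⟨n, δ, hn, hδ, hQ, ?_⟩
  rw [← heq]
  push_cast
  ring
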